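/- There exists a ∪-closed, well-graded, discriminative family F not containing the empty set whose surmise function does not partition its base. Concretely, the span of the base A = {{x,y,c}, {y,d}, {c,d}} on ground set {x,y,c,d} is discriminative and well-graded, but {σ(z) : z ∈ ∪F} is not a partition of A, since σ(y) and σ(c) are distinct but both contain {x,y,c} (indeed σ(y) ∩ σ(c) ≠ ∅ while σ(y) ≠ σ(c)). -/

import Mathlib

open Finset

variable {α : Type*} [DecidableEq α]

/-- The span of a family `G`: all unions of nonempty subfamilies of `G`. -/
def Span (G : Finset (Finset α)) : Finset (Finset α) :=
  (G.powerset.filter Finset.Nonempty).image fun H => H.sup id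

/-- A family is ∪-closed if it contains the union of each of its nonempty subfamilies. -/
def UnionClosed (F : Finset (Finset α)) : Prop :=
  ∀ H ⊆ F, H.Nonempty → H.sup id ∈ F

/-- `p` is a tight path from `P` to `Q` inside the family `F`. -/
def IsTightPath (F : Finset (Finset α)) (P Q : Finset α) (p : List (Finset α)) : Prop :=
  p.head? = some P ∧ p.getLast? = some Q ∧
  p.length = (symmDiff P Q).card + 1 ∧
  (∀ S ∈ p, S ∈ F) ∧
  List.Chain' (fun A B => (symmDiff A B).card = 1) p

/-- A family is well-graded if any two distinct members are joined by a tight path. -/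
def WellGraded (F : Finset (Finset α)) : Prop :=
  ∀ P ∈ F, ∀ Q ∈ F, P ≠ Q → ∃ p, IsTightPath F P Q p

/-- `B` is a base of `F`: a minimal subfamily of `F` spanning `F`. -/
def IsBase (B F : Finset (Finset α)) : Prop :=
  B ⊆ F ∧ Span B = F ∧ ∀ H ⊆ B, Span H = F → H = B

/-- `A` is an atom of `F` at `x`: an inclusion-minimal member of `F` containing `x`. -/
def IsAtomAt (F : Finset (Finset α)) (x : α) (A : Finset α) : Prop :=
  A ∈ F ∧ x ∈ A ∧ ∀ B ∈ F, x ∈ B → B ⊆ A → B = A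

/-- `A` is an atom of `F`: either the empty set (if it is in `F`) or an atom at some point. -/
def IsAtomOf (F : Finset (Finset α)) (A : Finset α) : Prop :=
  (A = ∅ ∧ A ∈ F) ∨ ∃ x, IsAtomAt F x A

/-- The surmise function: the collection of atoms of `F` at `x`. -/
def surmise (F : Finset (Finset α)) (x : α) : Finset (Finset α) :=
  F.filter fun A => x ∈ A ∧ ∀ B ∈ F, x ∈ B → B ⊆ A → B = A

/-- `{σ(x) : x ∈ ∪F}` forms a partition of `B \ {∅}`. -/
def SurmisePartition (F B : Finset (Finset α)) : Prop :=
  (∀ x ∈ F.sup id, ∀ y ∈ F.sup id,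
      surmise F x = surmise F y ∨ Disjoint (surmise F x) (surmise F y)) ∧
  (F.sup id).sup (surmise F) = B.erase ∅

/-- The endpoints of `X` in the family `B`: elements of `X` lying in no proper
subset of `X` belonging to `B`. -/
def endpoints (B : Finset (Finset α)) (X : Finset α) : Finset α :=
  X \ (B.filter fun Y => Y ⊂ X).sup id

/-- A family is discriminative if points contained in the same members are equal. -/
def Discriminative (F : Finset (Finset α)) : Prop :=
  ∀ u ∈ F.sup id, ∀ v ∈ F.sup id, (∀ S ∈ F, (u ∈ S ↔ v ∈ S)) → u = v


section Aux

variable {β : Type*} [DecidableEq β]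

lemma mySdiff (e : β ↪ α) (s t : Finset β) : (s \ t).map e = s.map e \ t.map e := by
  simp only [map_eq_image]
  exact Finset.image_sdiff s t e.injective

lemma mySymmDiff (e : β ↪ α) (s t : Finset β) :
    (symmDiff s t).map e = symmDiff (s.map e) (t.map e) := by
  rw [symmDiff_def, symmDiff_def]
  simp only [Finset.sup_eq_union, map_union, mySdiff]

lemma map_sup_id (e : β ↪ α) (F0 : Finset (Finset β)) :
    (F0.sup id).map e = F0.sup fun T => T.map e := by
  induction F0 using Finset.induction_on with
  | empty => simp
  | insert _ _ h ih => simp [Finset.sup_insert, map_union, ih]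

lemma toEmb_apply (e : β ↪ α) (s : Finset β) :
    (Finset.mapEmbedding e).toEmbedding s = s.map e := rfl

lemma sup_id_map (e : β ↪ α) (F0 : Finset (Finset β)) :
    (F0.map (Finset.mapEmbedding e).toEmbedding).sup id = (F0.sup id).map e := by
  rw [Finset.sup_map, map_sup_id]
  rfl

lemma span_map (e : β ↪ α) (G : Finset (Finset β)) :
    Span (G.map (Finset.mapEmbedding e).toEmbedding)
      = (Span G).map (Finset.mapEmbedding e).toEmbedding := by
  ext X
  simp only [Span, mem_image, mem_filter, mem_powerset, mem_map, mapEmbedding_apply]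
  constructor
  · rintro ⟨H, ⟨hH, hne⟩, rfl⟩
    obtain ⟨H0, hH0, rfl⟩ := Finset.subset_map_iff.mp hH
    refine ⟨H0.sup id, ⟨H0, ⟨hH0, ?_⟩, rfl⟩, (sup_id_map e H0).symm⟩
    obtain ⟨S, hS⟩ := hne
    rw [mem_map] at hS
    exact ⟨hS.choose, hS.choose_spec.1⟩
  · rintro ⟨T, ⟨H0, ⟨hH0, hne⟩, rfl⟩, rfl⟩
    exact ⟨H0.map ((Finset.mapEmbedding e).toEmbedding),
      ⟨map_subset_map.mpr hH0, Finset.Nonempty.map hne⟩, sup_id_map e H0⟩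

lemma unionClosed_span (G : Finset (Finset α)) : UnionClosed (Span G) := by
  intro H hH hne
  have h : ∀ S ∈ H, ∃ K, K ⊆ G ∧ K.Nonempty ∧ K.sup id = S := by
    intro S hS
    have := hH hS
    simp only [Span, mem_image, mem_filter, mem_powerset] at this
    obtain ⟨K, ⟨hK, hKne⟩, hKs⟩ := this
    exact ⟨K, hK, hKne, hKs⟩
  choose K hK1 hK2 hK3 using h
  simp only [Span, mem_image, mem_filter, mem_powerset]
  refine ⟨H.attach.biUnion (fun S => K S.1 S.2), ⟨?_, ?_⟩, ?_⟩
  · exact Finset.biUnion_subset.mpr fun S _ => hK1 S.1 S.2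
  · obtain ⟨S, hS⟩ := hne
    exact ((hK2 S hS).mono (Finset.subset_biUnion_of_mem _ (Finset.mem_attach _ ⟨S, hS⟩)))
  · rw [Finset.sup_biUnion]
    calc H.attach.sup (fun S => (K S.1 S.2).sup id)
        = H.attach.sup (fun S => S.1) := by
          apply Finset.sup_congr rfl; intro S _; exact hK3 S.1 S.2
      _ = H.sup id := Finset.sup_attach H id

lemma surmise_map (e : β ↪ α) (F0 : Finset (Finset β)) (a : β) :
    surmise (F0.map (Finset.mapEmbedding e).toEmbedding) (e a)
      = (surmise F0 a).map (Finset.mapEmbedding e).toEmbedding := by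
  ext X
  simp only [surmise, mem_filter, mem_map, Finset.mapEmbedding_apply]
  constructor
  · rintro ⟨⟨T, hT, rfl⟩, ha, hmin⟩
    refine ⟨T, ⟨hT, ?_, ?_⟩, rfl⟩
    · exact (Finset.mem_map' e).mp ha
    · intro B hB hab hsub
      have := hmin (B.map e) ⟨B, hB, rfl⟩ ((Finset.mem_map' e).mpr hab)
        (map_subset_map.mpr hsub)
      exact Finset.map_injective e this
  · rintro ⟨T, ⟨hT, ha, hmin⟩, rfl⟩
    refine ⟨⟨T, hT, rfl⟩, (Finset.mem_map' e).mpr ha, ?_⟩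
    rintro B ⟨B0, hB0, rfl⟩ hab hsub
    have := hmin B0 hB0 ((Finset.mem_map' e).mp hab) (map_subset_map.mp hsub)
    rw [this]

lemma discriminative_map (e : β ↪ α) (F0 : Finset (Finset β)) (h : Discriminative F0) :
    Discriminative (F0.map (Finset.mapEmbedding e).toEmbedding) := by
  intro u hu v hv huv
  rw [sup_id_map, mem_map] at hu hv
  obtain ⟨a, ha, rfl⟩ := hu
  obtain ⟨b, hb, rfl⟩ := hv
  congr 1
  refine h a ha b hb fun S hS => ?_
  have := huv (S.map e) (by rw [mem_map]; exact ⟨S, hS, rfl⟩)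
  simpa using this

lemma wellGraded_map (e : β ↪ α) (F0 : Finset (Finset β)) (h : WellGraded F0) :
    WellGraded (F0.map (Finset.mapEmbedding e).toEmbedding) := by
  rintro P hP Q hQ hne
  rw [mem_map] at hP hQ
  obtain ⟨P0, hP0, rfl⟩ := hP
  obtain ⟨Q0, hQ0, rfl⟩ := hQ
  obtain ⟨p, h1, h2, h3, h4, h5⟩ := h P0 hP0 Q0 hQ0 (fun hn => hne (congrArg _ hn))
  refine ⟨p.map (fun T => T.map e), ?_, ?_, ?_, ?_, ?_⟩
  · rw [List.head?_map, h1]; rfl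
  · rw [List.getLast?_map, h2]; rfl
  · simp only [toEmb_apply]
    rw [List.length_map, h3, ← mySymmDiff, Finset.card_map]
  · intro S hS
    rw [List.mem_map] at hS
    obtain ⟨T, hT, rfl⟩ := hS
    rw [mem_map]
    exact ⟨T, h4 T hT, rfl⟩
  · rw [show @List.Chain' (Finset α) = @List.IsChain (Finset α) from rfl, show @List.Chain' (Finset β) = @List.IsChain (Finset β) from rfl] at *
    rw [List.isChain_map]
    refine h5.imp fun A B hAB => ?_
    rw [← mySymmDiff, Finset.card_map]
    exact hAB

end Aux

def A0 : Finset (Finset (Fin 4)) := {{0,1,2},{1,3},{2,3}}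
def F0 : Finset (Finset (Fin 4)) := Span A0

lemma hF0eq : F0 = {{0,1,2},{1,3},{2,3},{1,2,3},{0,1,2,3}} := by decide

def path4 (P Q : Finset (Fin 4)) : List (Finset (Fin 4)) :=
  let s := (symmDiff P Q).card
  if s = 1 then [P, Q]
  else if s = 2 then
    [P, (if P = ({0,1,2} : Finset (Fin 4)) ∨ Q = {0,1,2} then {0,1,2,3} else {1,2,3}), Q]
  else if P = ({0,1,2} : Finset (Fin 4)) then [P, {0,1,2,3}, {1,2,3}, Q]
  else [P, {1,2,3}, {0,1,2,3}, Q]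

lemma wg_F0 : WellGraded F0 := by
  intro P hP Q hQ hne
  rw [hF0eq] at hP hQ
  refine ⟨path4 P Q, ?_⟩
  simp only [mem_insert, mem_singleton] at hP hQ
  unfold IsTightPath
  rcases hP with rfl|rfl|rfl|rfl|rfl <;> rcases hQ with rfl|rfl|rfl|rfl|rfl <;>
    first
      | exact absurd rfl hne
      | exact ⟨by decide, by decide, by decide, by decide,
          (by show List.IsChain _ _; decide)⟩

lemma disc_F0 : Discriminative F0 := by unfold Discriminative; decide

lemma base_min_F0 : ∀ H ⊆ A0, Span H = F0 → H = A0 := by decide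

lemma empty_not_F0 : (∅ : Finset (Fin 4)) ∉ F0 := by decide

lemma surmise_ne_F0 : surmise F0 1 ≠ surmise F0 2 := by decide

lemma surmise_y_F0 : ({0,1,2} : Finset (Fin 4)) ∈ surmise F0 1 := by decide
lemma surmise_c_F0 : ({0,1,2} : Finset (Fin 4)) ∈ surmise F0 2 := by decide

lemma sup_F0 : F0.sup id = ({0,1,2,3} : Finset (Fin 4)) := by decide

/-- A ∪-closed, well-graded, discriminative family not containing `∅` whose surmise
function does not partition its base. -/
theorem counterexample_surmise_not_partition (x y c d : α)
    (hxy : x ≠ y) (hxc : x ≠ c) (hxd : x ≠ d)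
    (hyc : y ≠ c) (hyd : y ≠ d) (hcd : c ≠ d) :
    let A : Finset (Finset α) := {{x, y, c}, {y, d}, {c, d}}
    let F : Finset (Finset α) := Span A
    UnionClosed F ∧ Discriminative F ∧ WellGraded F ∧ (∅ : Finset α) ∉ F ∧
      IsBase A F ∧
      surmise F y ≠ surmise F c ∧
      {x, y, c} ∈ surmise F y ∧ {x, y, c} ∈ surmise F c ∧
      ¬ Disjoint (surmise F y) (surmise F c) ∧
      ¬ SurmisePartition F A := by
  intro A F
  have hf : Function.Injective ![x, y, c, d] := by
    intro a b hab
    fin_cases a <;> fin_cases b <;> simp_all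
  set f : Fin 4 ↪ α := ⟨![x, y, c, d], hf⟩ with hfdef
  have hfx : f 0 = x := rfl
  have hfy : f 1 = y := rfl
  have hfc : f 2 = c := rfl
  have hfd : f 3 = d := rfl
  set E : Finset (Fin 4) ↪ Finset α := (Finset.mapEmbedding f).toEmbedding with hEdef
  have hE : ∀ s : Finset (Fin 4), E s = s.map f := fun s => rfl
  have hxyc : ({x, y, c} : Finset α) = ({0, 1, 2} : Finset (Fin 4)).map f := by
    rw [show ({0, 1, 2} : Finset (Fin 4)) = insert 0 (insert 1 {2}) from rfl]
    rw [Finset.map_insert, Finset.map_insert, Finset.map_singleton, hfx, hfy, hfc]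
  have hA : A = A0.map E := by
    show ({{x, y, c}, {y, d}, {c, d}} : Finset (Finset α)) = A0.map E
    rw [show A0 = insert {0,1,2} (insert {1,3} {({2,3} : Finset (Fin 4))}) from rfl]
    rw [Finset.map_insert, Finset.map_insert, Finset.map_singleton]
    rw [hE, hE, hE, ← hxyc]
    congr 1
    congr 1
    · rw [show ({1, 3} : Finset (Fin 4)) = insert 1 {3} from rfl,
        Finset.map_insert, Finset.map_singleton, hfy, hfd]
    · congr 1
      rw [show ({2, 3} : Finset (Fin 4)) = insert 2 {3} from rfl,
        Finset.map_insert, Finset.map_singleton, hfc, hfd]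
  have hF : F = F0.map E := by
    show Span A = F0.map E
    rw [hA, hEdef, span_map]
    rfl
  have hsurmy : surmise F y = (surmise F0 1).map E := by
    rw [hF, ← hfy, hEdef, surmise_map]
  have hsurmc : surmise F c = (surmise F0 2).map E := by
    rw [hF, ← hfc, hEdef, surmise_map]
  have hsne : surmise F y ≠ surmise F c := by
    rw [hsurmy, hsurmc]
    intro h
    exact surmise_ne_F0 (Finset.map_injective E h)
  have hymem : ({x, y, c} : Finset α) ∈ surmise F y := by
    rw [hsurmy, hxyc, ← hE, hEdef]
    exact Finset.mem_map_of_mem _ surmise_y_F0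
  have hcmem : ({x, y, c} : Finset α) ∈ surmise F c := by
    rw [hsurmc, hxyc, ← hE, hEdef]
    exact Finset.mem_map_of_mem _ surmise_c_F0
  have hndisj : ¬ Disjoint (surmise F y) (surmise F c) :=
    fun h => Finset.disjoint_left.mp h hymem hcmem
  have hsup : F.sup id = ({0, 1, 2, 3} : Finset (Fin 4)).map f := by
    rw [hF, hEdef, sup_id_map, sup_F0]
  refine ⟨?_, ?_, ?_, ?_, ?_, hsne, hymem, hcmem, hndisj, ?_⟩
  · exact unionClosed_span A
  · rw [hF, hEdef]
    exact discriminative_map f F0 disc_F0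
  · rw [hF, hEdef]
    exact wellGraded_map f F0 wg_F0
  · rw [hF]
    intro h
    rw [Finset.mem_map] at h
    obtain ⟨T, hT, hTe⟩ := h
    rw [hE, Finset.map_eq_empty] at hTe
    subst hTe
    exact empty_not_F0 hT
  · refine ⟨?_, ?_, ?_⟩
    · rw [hA, hF]
      exact Finset.map_subset_map.mpr (by decide : A0 ⊆ F0)
    · exact hF.symm ▸ hF ▸ rfl
    · intro H hH hSpan
      rw [hA] at hH ⊢
      obtain ⟨H0, hH0, rfl⟩ := Finset.subset_map_iff.mp hH
      have : Span (H0.map E) = F0.map E := by rw [← hF]; exact hSpan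
      rw [hEdef, span_map] at this
      have hH0span : Span H0 = F0 := Finset.map_injective _ this
      rw [base_min_F0 H0 hH0 hH0span]
  · rintro ⟨h1, -⟩
    have hy : y ∈ F.sup id := by
      rw [hsup, ← hfy]
      exact Finset.mem_map_of_mem _ (by decide)
    have hc : c ∈ F.sup id := by
      rw [hsup, ← hfc]
      exact Finset.mem_map_of_mem _ (by decide)
    rcases h1 y hy c hc with h | h
    · exact hsne h
    · exact hndisj h
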